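/- There is a constant C > 0 such that for every probability measure f on ℝ³ with density, finite second moment m₂(f), finite entropy H(f) = ∫ f log f, and every measurable set A ⊂ ℝ³ with Lebesgue measure |A| < 1, one has f(A) ≤ (C + H(f) + m₂(f)) / (−log |A|). In particular, if |A| ≤ exp(−4(C + H(f) + m₂(f))) then f(A) ≤ 1/4. -/

import Mathlib

open MeasureTheory

noncomputable section

lemma gauss_integrable : Integrable (fun x : EuclideanSpace ℝ (Fin 3) => Real.exp (-‖x‖ ^ 2)) := by
  have h := (GaussianFourier.integrable_cexp_neg_mul_sq_norm_add (b := 1)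
    (by norm_num) 0 (0 : EuclideanSpace ℝ (Fin 3))).re
  apply h.congr
  filter_upwards with x
  simp [← Complex.ofReal_pow, ← Complex.ofReal_neg, Complex.exp_ofReal_re]

lemma gauss_integral :
    (∫ x : EuclideanSpace ℝ (Fin 3), Real.exp (-‖x‖ ^ 2)) = Real.pi ^ ((3:ℝ) / 2) := by
  have h := GaussianFourier.integral_rexp_neg_mul_sq_norm (b := 1)
    (V := EuclideanSpace ℝ (Fin 3)) one_pos
  simpa using h

lemma key_ineq (t b : ℝ) (ht : 0 ≤ t) (hb : 0 < b) :
    t * Real.log b + t - b ≤ t * Real.log t := by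
  rcases ht.eq_or_lt with h | h
  · simp [← h]; linarith
  · have h1 : Real.log (b / t) ≤ b / t - 1 := Real.log_le_sub_one_of_pos (by positivity)
    rw [Real.log_div hb.ne' h.ne'] at h1
    have h2 : t * (Real.log b - Real.log t) ≤ t * (b / t - 1) :=
      mul_le_mul_of_nonneg_left h1 ht
    have h3 : t * (b / t) = b := by field_simp
    nlinarith

theorem statement15 :
    ∃ C : ℝ, 0 < C ∧ ∀ f : EuclideanSpace ℝ (Fin 3) → ℝ,
      (∀ x, 0 ≤ f x) → Integrable f → (∫ x, f x) = 1 →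
      Integrable (fun x => f x * Real.log (f x)) →
      Integrable (fun x => ‖x‖ ^ 2 * f x) →
      ∀ A : Set (EuclideanSpace ℝ (Fin 3)), MeasurableSet A → volume A < 1 →
        ((∫ x in A, f x) ≤
          (C + (∫ x, f x * Real.log (f x)) + ∫ x, ‖x‖ ^ 2 * f x) /
            (-Real.log (volume A).toReal)) ∧
        ((volume A).toReal ≤
            Real.exp (-4 * (C + (∫ x, f x * Real.log (f x)) + ∫ x, ‖x‖ ^ 2 * f x)) →
          (∫ x in A, f x) ≤ 1 / 4) := by
  refine ⟨1 + Real.pi ^ ((3:ℝ)/2), by positivity, ?_⟩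
  intro f hf0 hfi hf1 hfent hfm2 A hA hAvol
  set C : ℝ := 1 + Real.pi ^ ((3:ℝ)/2) with hC
  set H : ℝ := ∫ x, f x * Real.log (f x) with hH
  set M : ℝ := ∫ x, ‖x‖ ^ 2 * f x with hM
  set S : ℝ := C + H + M with hS
  have hAfin : volume A ≠ ⊤ := (hAvol.trans (by norm_num)).ne
  set V : ℝ := (volume A).toReal with hV
  have hV1 : V < 1 := by
    have := (ENNReal.toReal_lt_toReal hAfin ENNReal.one_ne_top).mpr hAvol
    simpa [← hV] using this
  have hV0 : 0 ≤ V := ENNReal.toReal_nonneg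
  have hm2_nonneg : ∀ x, 0 ≤ ‖x‖ ^ 2 * f x := fun x => mul_nonneg (by positivity) (hf0 x)
  have hnegint : Integrable (fun x => -(‖x‖ ^ 2 * f x)) := hfm2.neg
  have hcompl_bound : ∫ x in Aᶜ, f x * Real.log (f x) ≥
      -M + (∫ x in Aᶜ, f x) - Real.pi ^ ((3:ℝ)/2) := by
    have hptwise : ∀ x ∈ Aᶜ, (-(‖x‖^2 * f x) + f x - Real.exp (-‖x‖^2))
        ≤ f x * Real.log (f x) := by
      intro x _
      have := key_ineq (f x) (Real.exp (-‖x‖^2)) (hf0 x) (Real.exp_pos _)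
      rw [Real.log_exp] at this
      nlinarith [this]
    have hint1 : IntegrableOn
        (fun x => -(‖x‖^2 * f x) + f x - Real.exp (-‖x‖^2)) Aᶜ :=
      ((hnegint.add hfi).sub gauss_integrable).integrableOn
    have hmono := setIntegral_mono_on hint1 hfent.integrableOn hA.compl hptwise
    have heq : ∫ x in Aᶜ, (-(‖x‖^2 * f x) + f x - Real.exp (-‖x‖^2)) =
        (∫ x in Aᶜ, -(‖x‖^2 * f x)) + (∫ x in Aᶜ, f x) - ∫ x in Aᶜ, Real.exp (-‖x‖^2) := by
      rw [integral_sub, integral_add]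
      · exact hnegint.integrableOn
      · exact hfi.integrableOn
      · exact (hnegint.add hfi).integrableOn
      · exact gauss_integrable.integrableOn
    have h1 : (∫ x in Aᶜ, -(‖x‖^2 * f x)) = -(∫ x in Aᶜ, ‖x‖^2 * f x) := integral_neg _
    have h2 : (∫ x in Aᶜ, ‖x‖^2 * f x) ≤ M := by
      rw [hM]
      exact setIntegral_le_integral hfm2 (Filter.Eventually.of_forall hm2_nonneg)
    have h3 : (∫ x in Aᶜ, Real.exp (-‖x‖^2)) ≤ Real.pi ^ ((3:ℝ)/2) := by
      rw [← gauss_integral]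
      exact setIntegral_le_integral gauss_integrable
        (Filter.Eventually.of_forall fun x => (Real.exp_pos _).le)
    rw [heq, h1] at hmono
    linarith
  have hAnonneg : 0 ≤ ∫ x in A, f x :=
    setIntegral_nonneg hA fun x _ => hf0 x
  have hsplit : (∫ x in A, f x * Real.log (f x)) + (∫ x in Aᶜ, f x * Real.log (f x)) = H :=
    integral_add_compl hA hfent
  have hsplitf : (∫ x in A, f x) + (∫ x in Aᶜ, f x) = 1 := by
    rw [integral_add_compl hA hfi, hf1]
  have hS_pos : 1 ≤ S := by
    have hptwise : ∀ x, (-(‖x‖^2 * f x) + f x - Real.exp (-‖x‖^2))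
        ≤ f x * Real.log (f x) := by
      intro x
      have := key_ineq (f x) (Real.exp (-‖x‖^2)) (hf0 x) (Real.exp_pos _)
      rw [Real.log_exp] at this
      nlinarith [this]
    have hint1 : Integrable (fun x => -(‖x‖^2 * f x) + f x - Real.exp (-‖x‖^2)) :=
      (hnegint.add hfi).sub gauss_integrable
    have hmono := integral_mono (μ := volume) hint1 hfent (fun x => hptwise x)
    have eS : (∫ x, (-(‖x‖ ^ 2 * f x) + f x - Real.exp (-‖x‖ ^ 2))) =
        (∫ x, (-(‖x‖ ^ 2 * f x) + f x)) -
          ∫ x : EuclideanSpace ℝ (Fin 3), Real.exp (-‖x‖ ^ 2) :=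
      integral_sub (hnegint.add hfi) gauss_integrable
    have eA : (∫ x, (-(‖x‖ ^ 2 * f x) + f x)) =
        (∫ x, -(‖x‖ ^ 2 * f x)) + ∫ x, f x :=
      integral_add hnegint hfi
    have heq : ∫ x, (-(‖x‖^2 * f x) + f x - Real.exp (-‖x‖^2)) =
        (∫ x, -(‖x‖^2 * f x)) + (∫ x, f x) - ∫ x : EuclideanSpace ℝ (Fin 3), Real.exp (-‖x‖^2) := by
      rw [eS, eA]
    have h1 : (∫ x, -(‖x‖^2 * f x)) = -M := by rw [hM, ← integral_neg]
    rw [heq, h1, hf1, gauss_integral] at hmono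
    have hpi : (0:ℝ) < Real.pi ^ ((3:ℝ)/2) := by positivity
    rw [hS, hC]
    linarith
  have hmain : 0 < V → (∫ x in A, f x) * (-Real.log V) ≤ S := by
    intro hVpos
    set b : ℝ := 1 / V with hb
    have hbpos : 0 < b := by positivity
    have hlogb : Real.log b = -Real.log V := by
      rw [hb, Real.log_div one_ne_zero hVpos.ne', Real.log_one, zero_sub]
    have hptwise : ∀ x ∈ A, (f x * Real.log b + f x - b) ≤ f x * Real.log (f x) :=
      fun x _ => key_ineq (f x) b (hf0 x) hbpos
    have hconst : IntegrableOn (fun _ : EuclideanSpace ℝ (Fin 3) => b) A := by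
      apply (integrableOn_const_iff enorm_ne_top).mpr
      exact Or.inr (hAvol.trans_le le_top)
    have hmulint : Integrable (fun x => f x * Real.log b) := hfi.mul_const (Real.log b)
    have hint1 : IntegrableOn (fun x => f x * Real.log b + f x - b) A :=
      (hmulint.add hfi).integrableOn.sub hconst
    have hmono := setIntegral_mono_on hint1 hfent.integrableOn hA hptwise
    have e1 : ∫ x in A, (f x * Real.log b + f x - b) =
        (∫ x in A, (f x * Real.log b + f x)) - ∫ x in A, (fun _ => b) x :=
      integral_sub (hmulint.add hfi).integrableOn hconst
    have e2 : (∫ x in A, (f x * Real.log b + f x)) =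
        (∫ x in A, f x * Real.log b) + ∫ x in A, f x :=
      integral_add hmulint.integrableOn hfi.integrableOn
    have e3 : (∫ x in A, f x * Real.log b) = (∫ x in A, f x) * Real.log b :=
      integral_mul_const _ _
    have e4 : (∫ x in A, (fun _ : EuclideanSpace ℝ (Fin 3) => b) x) = V * b := by
      rw [setIntegral_const, smul_eq_mul, measureReal_def, ← hV]
    have hbV : V * b = 1 := by rw [hb]; field_simp
    rw [e1, e2, e3, e4, hbV, hlogb] at hmono
    rw [hS, hC]
    linarith [hcompl_bound, hsplit, hsplitf, hmono]
  have hzero : 0 = V → (∫ x in A, f x) = 0 := by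
    intro h
    have hAzero : volume A = 0 := by
      by_contra hne
      have h2 := ENNReal.toReal_pos hne hAfin
      rw [← hV] at h2
      linarith
    exact setIntegral_measure_zero _ hAzero
  constructor
  · rcases hV0.eq_or_lt with h | hVpos
    · rw [hzero h, ← h]
      simp
    · have hlogV : 0 < -Real.log V := by
        have := Real.log_neg hVpos hV1
        linarith
      rw [le_div_iff₀ hlogV]
      exact hmain hVpos
  · intro hsmall
    rcases hV0.eq_or_lt with h | hVpos
    · rw [hzero h]; norm_num
    · have hlogV : Real.log V ≤ -4 * S :=
        (Real.log_le_log hVpos hsmall).trans_eq (Real.log_exp _)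
      have h4S : 4 * S ≤ -Real.log V := by linarith
      have hm := hmain hVpos
      nlinarith [mul_le_mul_of_nonneg_left h4S hAnonneg, hS_pos, hAnonneg]
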